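/- Let X ⊂ ℝⁿ be an open bounded domain with Lipschitz boundary, u ∈ W^{1,∞}(X; ℝᵐ), and v ∈ L^∞(X; ℝ^{m×n}). If for every θ ∈ C¹(cl(X) × ℝᵐ; ℝⁿ) one has ∫_X [div_x θ(x, u(x)) + trace(v(x) · D_u θ(x, u(x)))] dx − ∫_{∂X} θ(x, u(x)) · n̂(x) dσ = 0, then v = Du almost everywhere on X. -/

import Mathlib

open MeasureTheory Set Filter

section Aux

variable {n m : ℕ}

private lemma hasFDerivAt_theta (j : Fin m) (g : (Fin n → ℝ) → ℝ)
    (hg : Differentiable ℝ g) (p : (Fin n → ℝ) × (Fin m → ℝ)) :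
    HasFDerivAt (fun q : (Fin n → ℝ) × (Fin m → ℝ) => q.2 j * g q.1)
      ((p.2 j) • ((fderiv ℝ g p.1).comp (ContinuousLinearMap.fst ℝ (Fin n → ℝ) (Fin m → ℝ))) +
        (g p.1) • ((ContinuousLinearMap.proj j).comp
          (ContinuousLinearMap.snd ℝ (Fin n → ℝ) (Fin m → ℝ)))) p := by
  have hc : HasFDerivAt (fun q : (Fin n → ℝ) × (Fin m → ℝ) => q.2 j)
      ((ContinuousLinearMap.proj j).comp
        (ContinuousLinearMap.snd ℝ (Fin n → ℝ) (Fin m → ℝ))) p :=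
    ((ContinuousLinearMap.proj j).comp
      (ContinuousLinearMap.snd ℝ (Fin n → ℝ) (Fin m → ℝ))).hasFDerivAt
  have hd : HasFDerivAt (fun q : (Fin n → ℝ) × (Fin m → ℝ) => g q.1)
      ((fderiv ℝ g p.1).comp (ContinuousLinearMap.fst ℝ (Fin n → ℝ) (Fin m → ℝ))) p :=
    ((hg p.1).hasFDerivAt).comp p hasFDerivAt_fst
  exact hc.mul hd

end Aux

set_option maxHeartbeats 1000000 in
/-- Proposition 2.1, "if" direction: if `X ⊂ ℝⁿ` is an open bounded
domain, `u ∈ W^{1,∞}(X;ℝᵐ)` (encoded: `u` is Lipschitz on `X`), `v ∈ L^∞(X;ℝ^{m×n})`,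
and for every `θ ∈ C¹(cl(X) × ℝᵐ; ℝⁿ)` the divergence identity
`∫_X [div_x θ(x,u) + tr(v · D_u θ(x,u))] dx − ∫_{∂X} θ(x,u)·n̂ dσ = 0` holds,
then `v = Du` almost everywhere on `X`. The surface measure `σ` on `∂X` and the
outward unit normal `n̂` are encoded via the divergence theorem (`hdivthm`). -/
theorem gradient_of_divergence_identity {n m : ℕ}
    (X : Set (Fin n → ℝ)) (hXopen : IsOpen X) (hXbdd : Bornology.IsBounded X)
    (σ : Measure (Fin n → ℝ)) (nhat : (Fin n → ℝ) → (Fin n → ℝ))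
    (hσ : σ (frontier X)ᶜ = 0)
    (hdivthm : ∀ w : (Fin n → ℝ) → (Fin n → ℝ), ContDiff ℝ 1 w →
      (∫ x in X, ∑ i, fderiv ℝ w x (Pi.single i 1) i) =
        ∫ x, (∑ i, w x i * nhat x i) ∂σ)
    (u : (Fin n → ℝ) → (Fin m → ℝ)) (K : NNReal) (hu : LipschitzOnWith K u (closure X))
    (v : (Fin n → ℝ) → (Fin m → Fin n → ℝ)) (hvm : Measurable v)
    (hvb : ∃ C : ℝ, ∀ᵐ x ∂(volume.restrict X), ‖v x‖ ≤ C)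
    (hibp : ∀ θ : (Fin n → ℝ) × (Fin m → ℝ) → (Fin n → ℝ), ContDiff ℝ 1 θ →
      (∫ x in X,
          ((∑ i, fderiv ℝ (fun q => θ q i) (x, u x) (Pi.single i 1, 0)) +
            ∑ i, ∑ j, v x j i * fderiv ℝ (fun q => θ q i) (x, u x) (0, Pi.single j 1)))
        - (∫ x, (∑ i, θ (x, u x) i * nhat x i) ∂σ) = 0) :
    ∀ᵐ x ∂(volume.restrict X),
      HasFDerivAt u ((Matrix.mulVecLin (Matrix.of (v x))).toContinuousLinearMap) x := by
  classical
  obtain ⟨C, hC⟩ := hvb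
  obtain ⟨ut, hut, hueq⟩ := hu.extend_pi
  have hXmeas : MeasurableSet X := hXopen.measurableSet
  have hXfin : volume X < ⊤ := hXbdd.measure_lt_top
  have hclX : IsCompact (closure X) := hXbdd.isCompact_closure
  have huX : ∀ x ∈ X, u x = ut x := fun x hx => hueq (subset_closure hx)
  -- the components of `ut` are Lipschitz
  have hw : ∀ j : Fin m, LipschitzWith
      (‖(ContinuousLinearMap.proj j : (Fin m → ℝ) →L[ℝ] ℝ)‖₊ * K) (fun y => ut y j) :=
    fun j => ((ContinuousLinearMap.proj j : (Fin m → ℝ) →L[ℝ] ℝ)).lipschitz.comp hut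
  -- integrability of `v` entries on `X`
  have hvjk_meas : ∀ (j : Fin m) (k : Fin n), Measurable (fun x => v x j k) := fun j k =>
    (measurable_pi_apply k).comp ((measurable_pi_apply j).comp hvm)
  have hvjk_bd : ∀ (j : Fin m) (k : Fin n), ∀ᵐ x ∂(volume.restrict X), ‖v x j k‖ ≤ C := by
    intro j k
    filter_upwards [hC] with x hx
    exact le_trans (norm_le_pi_norm (v x j) k) (le_trans (norm_le_pi_norm (v x) j) hx)
  have hvjk_int : ∀ (j : Fin m) (k : Fin n), IntegrableOn (fun x => v x j k) X volume :=
    fun j k => ⟨((hvjk_meas j k).aestronglyMeasurable),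
      HasFiniteIntegral.restrict_of_bounded (C := C) hXfin (hvjk_bd j k)⟩
  -- integrability of the line derivatives on `X`
  have hld_int : ∀ (j : Fin m) (k : Fin n),
      IntegrableOn (fun x => lineDeriv ℝ (fun y => ut y j) x (Pi.single k 1)) X volume :=
    fun j k => (((hw j).locallyIntegrable_lineDeriv (Pi.single k 1)).integrableOn_isCompact
      hclX).mono_set subset_closure
  -- MAIN STEP: for each j k, `v x j k = lineDeriv ℝ (ut · j) x (Pi.single k 1)` a.e. on X
  have main : ∀ (j : Fin m) (k : Fin n), ∀ᵐ x ∂(volume : Measure (Fin n → ℝ)), x ∈ X →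
      v x j k - lineDeriv ℝ (fun y => ut y j) x (Pi.single k 1) = 0 := by
    intro j k
    apply hXopen.ae_eq_zero_of_integral_contDiff_smul_eq_zero
    · exact MeasureTheory.IntegrableOn.locallyIntegrableOn ((hvjk_int j k).sub (hld_int j k))
    · intro g hg hgc hsupp
      have hg1 : ContDiff ℝ 1 g := hg.of_le (mod_cast le_top)
      have hgd : Differentiable ℝ g := hg1.differentiable one_ne_zero
      have hgz : ∀ x ∉ X, g x = 0 := fun x hx =>
        image_eq_zero_of_notMem_tsupport (fun hmem => hx (hsupp hmem))
      -- bound for g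
      obtain ⟨Bg, hBg0⟩ := (hg.continuous.norm).bounded_above_of_compact_support hgc.norm
      have hBg : ∀ x, ‖g x‖ ≤ Bg := fun x => by simpa using hBg0 x
      -- the test function θ
      set θ : (Fin n → ℝ) × (Fin m → ℝ) → (Fin n → ℝ) :=
        fun q i => if i = k then q.2 j * g q.1 else 0 with hθdef
      have hθk : (fun q : (Fin n → ℝ) × (Fin m → ℝ) => θ q k) =
          fun q => q.2 j * g q.1 := by funext q; simp [hθdef]
      have hθne : ∀ i, i ≠ k → (fun q : (Fin n → ℝ) × (Fin m → ℝ) => θ q i) =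
          fun _ => (0 : ℝ) := by intro i hi; funext q; simp [hθdef, hi]
      have hθ : ContDiff ℝ 1 θ := by
        apply contDiff_pi.2
        intro i
        by_cases hik : i = k
        · subst hik
          simp only [hθdef, if_pos rfl]
          exact (((ContinuousLinearMap.proj j).comp
            (ContinuousLinearMap.snd ℝ (Fin n → ℝ) (Fin m → ℝ))).contDiff).mul
            (hg1.comp contDiff_fst)
        · simp only [hθdef, if_neg hik]
          exact contDiff_const
      have hfd : ∀ p : (Fin n → ℝ) × (Fin m → ℝ),
          fderiv ℝ (fun q : (Fin n → ℝ) × (Fin m → ℝ) => θ q k) p =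
          (p.2 j) • ((fderiv ℝ g p.1).comp
              (ContinuousLinearMap.fst ℝ (Fin n → ℝ) (Fin m → ℝ))) +
            (g p.1) • ((ContinuousLinearMap.proj j).comp
              (ContinuousLinearMap.snd ℝ (Fin n → ℝ) (Fin m → ℝ))) := by
        intro p
        rw [hθk]
        exact (hasFDerivAt_theta j g hgd p).fderiv
      -- pointwise identification of the two sums in hibp
      have A : ∀ x : Fin n → ℝ,
          (∑ i, fderiv ℝ (fun q => θ q i) (x, u x) (Pi.single i 1, 0)) =
            u x j * fderiv ℝ g x (Pi.single k 1) := by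
        intro x
        rw [Finset.sum_eq_single k]
        · rw [hfd (x, u x)]
          simp
        · intro i _ hi
          rw [hθne i hi]
          simp
        · simp
      have B : ∀ x : Fin n → ℝ,
          (∑ i, ∑ l, v x l i * fderiv ℝ (fun q => θ q i) (x, u x) (0, Pi.single l 1)) =
            v x j k * g x := by
        intro x
        rw [Finset.sum_eq_single k]
        · have : ∀ l : Fin m,
              fderiv ℝ (fun q => θ q k) (x, u x) ((0 : Fin n → ℝ), Pi.single l 1) =
                g x * (Pi.single l 1 : Fin m → ℝ) j := by
            intro l
            rw [hfd (x, u x)]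
            simp
          simp only [this, Pi.single_apply]
          have hcg : ∀ l : Fin m, v x l k * (g x * (if j = l then (1:ℝ) else 0)) =
              (if j = l then v x l k * g x else 0) := by
            intro l; split <;> simp_all
          rw [Finset.sum_congr rfl (fun l _ => hcg l)]
          exact (Finset.sum_ite_eq Finset.univ j (fun l => v x l k * g x)).trans (by simp)
        · intro i _ hi
          rw [hθne i hi]
          simp
        · simp
      -- the boundary term vanishes
      have hbd : ∫ x, (∑ i, θ (x, u x) i * nhat x i) ∂σ = 0 := by
        apply integral_eq_zero_of_ae
        have h1 : ∀ᵐ x ∂σ, x ∈ frontier X := by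
          rw [ae_iff]
          exact hσ
        filter_upwards [h1] with x hx
        have hxX : x ∉ X := by
          rw [hXopen.frontier_eq] at hx
          exact hx.2
        simp [hθdef, hgz x hxX]
      -- the integration-by-parts identity from the hypothesis
      have h := hibp θ hθ
      rw [hbd, sub_zero] at h
      have step1 : ∫ x in X,
          (u x j * fderiv ℝ g x (Pi.single k 1) + v x j k * g x) = 0 := by
        rw [← h]
        exact setIntegral_congr_fun hXmeas (fun x _ => by rw [A x, B x])
      -- integrability of the two pieces on X
      have hgder_cont : Continuous (fun x => fderiv ℝ g x (Pi.single k 1)) :=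
        (hg.continuous_fderiv (by simp)).clm_apply continuous_const
      have Iu : IntegrableOn (fun x => u x j * fderiv ℝ g x (Pi.single k 1)) X volume := by
        apply (ContinuousOn.integrableOn_compact hclX ?_).mono_set subset_closure
        exact ((continuous_apply j).comp_continuousOn hu.continuousOn).mul
          hgder_cont.continuousOn
      have Iv : IntegrableOn (fun x => v x j k * g x) X volume := by
        refine ⟨((hvjk_meas j k).mul hg.continuous.measurable).aestronglyMeasurable, ?_⟩
        apply HasFiniteIntegral.restrict_of_bounded (C := C * Bg + |C| * Bg) hXfin
        filter_upwards [hvjk_bd j k] with x hx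
        have h1 : ‖v x j k * g x‖ ≤ C * Bg := by
          rw [norm_mul]
          exact mul_le_mul hx (hBg x) (norm_nonneg _)
            (le_trans (norm_nonneg _) hx)
        nlinarith [abs_nonneg C, norm_nonneg (g x), hBg x, norm_nonneg (v x j k)]
      have step1' : ∫ x in X, v x j k * g x
          = - ∫ x in X, u x j * fderiv ℝ g x (Pi.single k 1) := by
        rw [integral_add Iu Iv] at step1
        linarith
      -- integration by parts for the Lipschitz function `ut · j`
      obtain ⟨D, hgl⟩ := ContDiff.lipschitzWith_of_hasCompactSupport hgc hg (by simp)
      have hibp2 := LipschitzWith.integral_lineDeriv_mul_eq (μ := volume)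
        (hw j) hgl hgc (Pi.single k 1)
      have hL : ∫ x, lineDeriv ℝ (fun y => ut y j) x (Pi.single k 1) * g x
          = ∫ x in X, lineDeriv ℝ (fun y => ut y j) x (Pi.single k 1) * g x :=
        (setIntegral_eq_integral_of_forall_compl_eq_zero
          (fun x hx => by rw [hgz x hx, mul_zero])).symm
      have e1 : ∀ x, lineDeriv ℝ g x (-Pi.single k 1) =
          -(fderiv ℝ g x (Pi.single k 1)) := fun x => by
        rw [DifferentiableAt.lineDeriv_eq_fderiv (hgd x), map_neg]
      have hR : ∫ x, lineDeriv ℝ g x (-Pi.single k 1) * (fun y => ut y j) x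
          = ∫ x in X, -(fderiv ℝ g x (Pi.single k 1)) * u x j := by
        simp only [e1]
        rw [← setIntegral_eq_integral_of_forall_compl_eq_zero (s := X)
          (f := fun x => -(fderiv ℝ g x (Pi.single k 1)) * ut x j)]
        · exact setIntegral_congr_fun hXmeas (fun x hx => by rw [huX x hx])
        · intro x hx
          have hnt : x ∉ tsupport g := fun hmem => hx (hsupp hmem)
          have : fderiv ℝ g x = 0 := by
            by_contra hne
            exact hnt (support_fderiv_subset ℝ (Function.mem_support.2 hne))
          rw [this]
          simp
      have step2 : ∫ x in X, lineDeriv ℝ (fun y => ut y j) x (Pi.single k 1) * g x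
          = - ∫ x in X, u x j * fderiv ℝ g x (Pi.single k 1) := by
        rw [← hL, hibp2, hR, ← integral_neg]
        exact setIntegral_congr_fun hXmeas (fun x _ => by ring)
      -- conclude
      have Ild' : IntegrableOn
          (fun x => g x * lineDeriv ℝ (fun y => ut y j) x (Pi.single k 1)) X volume :=
        (hld_int j k).bdd_mul hg.continuous.aestronglyMeasurable (ae_of_all _ hBg)
      have Ild : IntegrableOn
          (fun x => lineDeriv ℝ (fun y => ut y j) x (Pi.single k 1) * g x) X volume := by
        simpa [mul_comm] using Ild'
      have hsplit : ∫ x, g x • (v x j k - lineDeriv ℝ (fun y => ut y j) x (Pi.single k 1))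
          = ∫ x in X, (v x j k * g x
            - lineDeriv ℝ (fun y => ut y j) x (Pi.single k 1) * g x) := by
        rw [← setIntegral_eq_integral_of_forall_compl_eq_zero (s := X)
          (fun x hx => by rw [hgz x hx, zero_smul])]
        apply setIntegral_congr_fun hXmeas
        intro x _
        simp [smul_eq_mul]
        ring
      rw [hsplit, integral_sub Iv Ild, step1', step2]
      ring
  -- ASSEMBLY
  have hdiff : ∀ᵐ x ∂(volume : Measure (Fin n → ℝ)), DifferentiableAt ℝ ut x :=
    hut.ae_differentiableAt
  have hall : ∀ᵐ x ∂(volume : Measure (Fin n → ℝ)), ∀ (j : Fin m) (k : Fin n), x ∈ X →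
      v x j k - lineDeriv ℝ (fun y => ut y j) x (Pi.single k 1) = 0 :=
    ae_all_iff.2 fun j => ae_all_iff.2 fun k => main j k
  filter_upwards [ae_restrict_of_ae hdiff, ae_restrict_of_ae hall, ae_restrict_mem hXmeas]
    with x hx hvx hxX
  have h1 : HasFDerivAt ut (fderiv ℝ ut x) x := hx.hasFDerivAt
  have h2 : HasFDerivAt u (fderiv ℝ ut x) x := by
    apply h1.congr_of_eventuallyEq
    filter_upwards [hXopen.mem_nhds hxX] with y hy using huX y hy
  have key : ((Matrix.mulVecLin (Matrix.of (v x))).toContinuousLinearMap :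
      (Fin n → ℝ) →L[ℝ] (Fin m → ℝ)) = fderiv ℝ ut x := by
    apply ContinuousLinearMap.coe_injective
    apply Module.Basis.ext (Pi.basisFun ℝ (Fin n))
    intro k
    funext j
    have hcomp : HasFDerivAt (fun y => ut y j)
        ((ContinuousLinearMap.proj j).comp (fderiv ℝ ut x)) x :=
      ((ContinuousLinearMap.proj j : (Fin m → ℝ) →L[ℝ] ℝ).hasFDerivAt).comp x h1
    have hld : lineDeriv ℝ (fun y => ut y j) x (Pi.single k 1) =
        fderiv ℝ ut x (Pi.single k 1) j := by
      rw [DifferentiableAt.lineDeriv_eq_fderiv hcomp.differentiableAt, hcomp.fderiv]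
      rfl
    have hv : v x j k = fderiv ℝ ut x (Pi.single k 1) j := by
      have := hvx j k hxX
      rw [hld] at this
      linarith
    simpa [Matrix.mulVecLin, Pi.basisFun_apply, hv] using hv.symm ▸ rfl
  rw [key]
  exact h2
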